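/- Let v and u be vertices with open intervals I_v = (L_v,U_v), I_u = (L_u,U_u) and weights w_v ∈ I_v, w_u ∈ I_u, belonging to a common hyperedge S in which v is leftmost (L_v is minimum among lower limits in S). If I_u ⊆ I_v, then v is mandatory: every feasible query set for S contains v. -/
import Mathlib


open Finset

/-- Lower endpoint of vertex `v`'s interval after querying the set `Q`. -/
def qlo {V : Type*} [DecidableEq V] (L w : V → ℝ) (Q : Finset V) (v : V) : ℝ :=
  if v ∈ Q then w v else L v

/-- Upper endpoint of vertex `v`'s interval after querying the set `Q`. -/
def qhi {V : Type*} [DecidableEq V] (U w : V → ℝ) (Q : Finset V) (v : V) : ℝ :=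
  if v ∈ Q then w v else U v

/-- The query set `Q` suffices to orient the hyperedge `S`: some vertex of `S`
has its (updated) interval weakly below all other (updated) intervals of `S`. -/
def Solves {V : Type*} [DecidableEq V] (L U w : V → ℝ) (Q : Finset V) (S : Finset V) : Prop :=
  ∃ m ∈ S, ∀ u ∈ S, u ≠ m → qhi U w Q m ≤ qlo L w Q u

theorem stmt12 {V : Type*} [DecidableEq V] (L U w : V → ℝ)
    (hw : ∀ x : V, w x ∈ Set.Ioo (L x) (U x))
    (S : Finset V) (v u : V) (hvS : v ∈ S) (huS : u ∈ S) (hne : v ≠ u)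
    (hleft : ∀ x ∈ S, L v ≤ L x)
    (hsub : Set.Ioo (L u) (U u) ⊆ Set.Ioo (L v) (U v)) :
    ∀ Q : Finset V, Solves L U w Q S → v ∈ Q := by
  intro Q hQ
  by_contra hvQ
  obtain ⟨m, hmS, hm⟩ := hQ
  have hwu := hw u
  have hwv := hw v
  have hwuv : w u ∈ Set.Ioo (L v) (U v) := hsub hwu
  by_cases hmv : m = v
  · subst hmv
    have h := hm u huS (Ne.symm hne)
    simp only [qhi, qlo, if_neg hvQ] at h
    split_ifs at h
    · exact absurd (lt_of_lt_of_le hwuv.2 h) (lt_irrefl _)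
    · exact absurd (lt_of_lt_of_le (lt_trans hwu.1 hwuv.2) h) (lt_irrefl _)
  · have h := hm v hvS (fun h => hmv h.symm)
    simp only [qhi, qlo, if_neg hvQ] at h
    have hLm : L v ≤ L m := hleft m hmS
    have hwm := hw m
    split_ifs at h
    · exact absurd (lt_of_le_of_lt h (lt_of_le_of_lt hLm hwm.1)) (lt_irrefl _)
    · exact absurd (lt_of_le_of_lt h (lt_of_le_of_lt hLm (lt_trans hwm.1 hwm.2))) (lt_irrefl _)
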